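/- Consider three balls thrown independently and uniformly according to the distribution p(0) = ε, p(1) = ... = p(n) = (1−ε)/n over urns 0,...,n, and let a_k be the probability that exactly k urns are occupied. Then a_2² < a_1 a_3 whenever ε is sufficiently small and n ε^{3/2} is sufficiently large; in particular, there exist ε ∈ (0,1) and n such that the sequence (a_1, a_2, a_3) is not log-concave. -/

import Mathlib

open Finset

/-- Probability that a single ball lands in urn `j`: urn `0` gets `ε`,
each of urns `1,...,n` gets `(1-ε)/n`. -/
noncomputable def urnP (n : ℕ) (ε : ℝ) (j : Fin (n + 1)) : ℝ :=
  if j = 0 then ε else (1 - ε) / n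

/-- `a_k`: probability that exactly `k` urns are occupied when three i.i.d. balls
are thrown according to `urnP n ε`. -/
noncomputable def urnA (n : ℕ) (ε : ℝ) (k : ℕ) : ℝ :=
  ∑ σ : Fin 3 → Fin (n + 1),
    if (univ.image σ).card = k then ∏ b, urnP n ε (σ b) else 0

section Aux

def finThreeEquiv (X : Type*) : (Fin 3 → X) ≃ X × X × X where
  toFun σ := (σ 0, σ 1, σ 2)
  invFun x := ![x.1, x.2.1, x.2.2]
  left_inv σ := by funext i; fin_cases i <;> rfl
  right_inv x := rfl

lemma sum_fin3 {X : Type*} [Fintype X] (g : (Fin 3 → X) → ℝ) :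
    ∑ σ : Fin 3 → X, g σ = ∑ a, ∑ b, ∑ c, g ![a, b, c] :=
  calc ∑ σ : Fin 3 → X, g σ
      = ∑ x : X × X × X, g ![x.1, x.2.1, x.2.2] := by
        refine Fintype.sum_equiv (finThreeEquiv X) _ _ (fun σ => ?_)
        have h : (![σ 0, σ 1, σ 2]) = σ := by funext i; fin_cases i <;> rfl
        show g σ = g ![σ 0, σ 1, σ 2]
        rw [h]
    _ = ∑ a, ∑ b, ∑ c, g ![a, b, c] := by
        rw [Fintype.sum_prod_type]
        simp only [Fintype.sum_prod_type]

lemma image_fin3 {X : Type*} [DecidableEq X] (a b c : X) :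
    (univ.image ![a, b, c]) = {a, b, c} := by
  ext x
  simp only [mem_image, mem_univ, true_and, mem_insert, mem_singleton]
  constructor
  · rintro ⟨i, hi⟩; fin_cases i <;> simp at hi <;> tauto
  · rintro (rfl | rfl | rfl)
    exacts [⟨0, rfl⟩, ⟨1, rfl⟩, ⟨2, rfl⟩]

lemma prod_fin3 {X : Type*} (p : X → ℝ) (a b c : X) :
    ∏ i, p (![a, b, c] i) = p a * p b * p c := by
  rw [Fin.prod_univ_three]; rfl

lemma card_le_two' {X : Type*} [DecidableEq X] (x y : X) :
    ({x, y} : Finset X).card ≤ 2 := by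
  have := Finset.card_insert_le x ({y} : Finset X)
  simpa using this

lemma card3_one {X : Type*} [DecidableEq X] (a b c : X) :
    ({a, b, c} : Finset X).card = 1 ↔ (b = a ∧ c = a) := by
  constructor
  · intro h
    rw [Finset.card_eq_one] at h
    obtain ⟨x, hx⟩ := h
    have ha : a ∈ ({a,b,c} : Finset X) := by simp
    have hb : b ∈ ({a,b,c} : Finset X) := by simp
    have hc : c ∈ ({a,b,c} : Finset X) := by simp
    rw [hx, Finset.mem_singleton] at ha hb hc
    exact ⟨hb.trans ha.symm, hc.trans ha.symm⟩
  · rintro ⟨rfl, rfl⟩; simp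

lemma card3_three {X : Type*} [DecidableEq X] (a b c : X) :
    ({a, b, c} : Finset X).card = 3 ↔ (a ≠ b ∧ a ≠ c ∧ b ≠ c) := by
  constructor
  · intro h
    refine ⟨?_, ?_, ?_⟩ <;> rintro rfl
    · have hs : ({a, a, c} : Finset X) ⊆ {a, c} := by intro x; simp
      have := (Finset.card_le_card hs).trans (card_le_two' a c); omega
    · have hs : ({a, b, a} : Finset X) ⊆ {a, b} := by intro x; simp; tauto
      have := (Finset.card_le_card hs).trans (card_le_two' a b); omega
    · have hs : ({a, b, b} : Finset X) ⊆ {a, b} := by intro x; simp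
      have := (Finset.card_le_card hs).trans (card_le_two' a b); omega
  · rintro ⟨h1, h2, h3⟩
    rw [Finset.card_insert_of_notMem (by simp [h1, h2]),
        Finset.card_insert_of_notMem (by simp [h3]), Finset.card_singleton]

lemma sum_distinct {X : Type*} [Fintype X] [DecidableEq X] (p : X → ℝ) :
    ∑ a, ∑ b, ∑ c, (if a ≠ b ∧ a ≠ c ∧ b ≠ c then p a * p b * p c else 0)
      = (∑ a, p a)^3 - 3 * (∑ a, p a^2) * (∑ a, p a) + 2 * ∑ a, p a^3 := by
  have key : ∀ (a b c : X), (if a ≠ b ∧ a ≠ c ∧ b ≠ c then p a * p b * p c else 0)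
      = p a * p b * p c
        - (if b = a then p a * p b * p c else 0)
        - (if c = a then p a * p b * p c else 0)
        - (if c = b then p a * p b * p c else 0)
        + 2 * (if b = a then (if c = a then p a * p b * p c else 0) else 0) := by
    intro a b c
    by_cases h1 : b = a <;> by_cases h2 : c = a <;> by_cases h3 : c = b <;>
      simp_all [Ne, eq_comm] <;> ring
  have e1 : ∀ a b : X, p a * p b * p a = p a ^ 2 * p b := fun a b => by ring
  have e2 : ∀ a b : X, p a * p b * p b = p a * p b ^ 2 := fun a b => by ring
  have h0 : ∑ a : X, ∑ b : X, ∑ c : X, p a * p b * p c = (∑ a, p a) ^ 3 := by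
    simp only [← Finset.sum_mul, ← Finset.mul_sum]; ring
  have h1 : ∑ a : X, ∑ b : X, ∑ c : X, (if b = a then p a * p b * p c else 0)
      = (∑ a, p a ^ 2) * (∑ a, p a) := by
    have inner : ∀ a : X, (∑ b : X, ∑ c : X, if b = a then p a * p b * p c else 0)
        = p a ^ 2 * ∑ c, p c := by
      intro a
      rw [Finset.sum_comm]
      simp only [Finset.sum_ite_eq', Finset.mem_univ, if_true, e1]
      simp only [← Finset.mul_sum]
      ring
    simp only [inner]
    rw [← Finset.sum_mul]
  have h2 : ∑ a : X, ∑ b : X, ∑ c : X, (if c = a then p a * p b * p c else 0)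
      = (∑ a, p a ^ 2) * (∑ a, p a) := by
    simp only [Finset.sum_ite_eq', Finset.mem_univ, if_true, e1]
    simp only [← Finset.mul_sum, ← Finset.sum_mul]
  have h3 : ∑ a : X, ∑ b : X, ∑ c : X, (if c = b then p a * p b * p c else 0)
      = (∑ a, p a) * (∑ a, p a ^ 2) := by
    simp only [Finset.sum_ite_eq', Finset.mem_univ, if_true, e2]
    simp only [← Finset.mul_sum, ← Finset.sum_mul]
  have h4 : ∑ a : X, ∑ b : X, ∑ c : X,
      (if b = a then (if c = a then p a * p b * p c else 0) else 0) = ∑ a, p a ^ 3 := by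
    have inner : ∀ a : X, (∑ b : X, ∑ c : X,
        if b = a then (if c = a then p a * p b * p c else 0) else 0) = p a ^ 3 := by
      intro a
      rw [Finset.sum_comm]
      simp only [Finset.sum_ite_eq', Finset.mem_univ, if_true]
      ring
    simp only [inner]
  simp only [key, Finset.sum_add_distrib, Finset.sum_sub_distrib, ← Finset.mul_sum,
    h0, h1, h2, h3, h4]
  simp only [← Finset.sum_mul, ← Finset.mul_sum]
  ring

lemma sum_all_eq {X : Type*} [Fintype X] [DecidableEq X] (p : X → ℝ) :
    ∑ a, ∑ b, ∑ c, (if b = a ∧ c = a then p a * p b * p c else 0) = ∑ a, p a ^ 3 := by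
  have key : ∀ (a b c : X), (if b = a ∧ c = a then p a * p b * p c else 0)
      = (if b = a then (if c = a then p a * p b * p c else 0) else 0) := by
    intro a b c
    by_cases h1 : b = a <;> by_cases h2 : c = a <;> simp [h1, h2]
  simp only [key]
  refine Finset.sum_congr rfl (fun a _ => ?_)
  rw [Finset.sum_comm]
  simp only [Finset.sum_ite_eq', Finset.mem_univ, if_true]
  ring

/-- Closed form for `urnA n ε 1`. -/
lemma urnA_one (n : ℕ) (ε : ℝ) : urnA n ε 1 = ∑ j, (urnP n ε j) ^ 3 := by
  unfold urnA
  rw [sum_fin3]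
  simp only [image_fin3, prod_fin3]
  have : ∀ a b c : Fin (n+1),
      (if ({a, b, c} : Finset (Fin (n+1))).card = 1
        then urnP n ε a * urnP n ε b * urnP n ε c else 0)
      = (if b = a ∧ c = a then urnP n ε a * urnP n ε b * urnP n ε c else 0) := by
    intro a b c; simp only [card3_one]
  simp only [this]
  exact sum_all_eq _

/-- Closed form for `urnA n ε 3`. -/
lemma urnA_three (n : ℕ) (ε : ℝ) :
    urnA n ε 3 = (∑ j, urnP n ε j)^3 - 3 * (∑ j, (urnP n ε j)^2) * (∑ j, urnP n ε j)
      + 2 * ∑ j, (urnP n ε j)^3 := by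
  unfold urnA
  rw [sum_fin3]
  simp only [image_fin3, prod_fin3]
  have : ∀ a b c : Fin (n+1),
      (if ({a, b, c} : Finset (Fin (n+1))).card = 3
        then urnP n ε a * urnP n ε b * urnP n ε c else 0)
      = (if a ≠ b ∧ a ≠ c ∧ b ≠ c then urnP n ε a * urnP n ε b * urnP n ε c else 0) := by
    intro a b c; simp only [card3_three]
  simp only [this]
  exact sum_distinct _

/-- The three probabilities sum to the cube of the total mass. -/
lemma urnA_total (n : ℕ) (ε : ℝ) :
    urnA n ε 1 + urnA n ε 2 + urnA n ε 3 = (∑ j, urnP n ε j) ^ 3 := by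
  unfold urnA
  rw [← Finset.sum_add_distrib, ← Finset.sum_add_distrib]
  have : ∀ σ : Fin 3 → Fin (n+1),
      ((if (univ.image σ).card = 1 then ∏ b, urnP n ε (σ b) else 0)
        + (if (univ.image σ).card = 2 then ∏ b, urnP n ε (σ b) else 0))
        + (if (univ.image σ).card = 3 then ∏ b, urnP n ε (σ b) else 0)
      = ∏ b, urnP n ε (σ b) := by
    intro σ
    have h1 : 1 ≤ (univ.image σ).card := by
      have : (0 : Fin 3) ∈ (univ : Finset (Fin 3)) := Finset.mem_univ _
      have : σ 0 ∈ univ.image σ := Finset.mem_image_of_mem σ this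
      exact Finset.card_pos.mpr ⟨_, this⟩
    have h2 : (univ.image σ).card ≤ 3 := by
      have := Finset.card_image_le (s := (univ : Finset (Fin 3))) (f := σ)
      simpa using this
    interval_cases h : (univ.image σ).card <;> simp
  rw [Finset.sum_congr rfl (fun σ _ => this σ)]
  rw [← Fin.prod_const 3 (∑ j, urnP n ε j), Finset.prod_univ_sum]
  simp [Fintype.piFinset_univ]

/-- Power sums of `urnP`. -/
lemma urnP_pow_sum (n : ℕ) (ε : ℝ) (m : ℕ) :
    ∑ j, (urnP n ε j) ^ m = ε ^ m + n * ((1 - ε) / n) ^ m := by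
  rw [Fin.sum_univ_succ]
  simp [urnP, Fin.succ_ne_zero, mul_comm]

end Aux


set_option maxHeartbeats 1000000 in
lemma urn_core (n : ℕ) (ε A1 A2 A3 : ℝ) (hε : 0 < ε) (hε' : ε < 1/100)
    (h : (100:ℝ) < n * ε ^ ((3:ℝ)/2))
    (hA1 : A1 = ε^3 + (1-ε)^3/(n:ℝ)^2)
    (hA3 : A3 = 1 - 3*(ε^2 + (1-ε)^2/(n:ℝ)) + 2*(ε^3 + (1-ε)^3/(n:ℝ)^2))
    (hA2 : A2 = 3*(ε^2 + (1-ε)^2/(n:ℝ)) - 3*(ε^3 + (1-ε)^3/(n:ℝ)^2)) :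
    A2^2 < A1 * A3 := by
  have hε1 : ε < 1 := by linarith
  have h1e : (0:ℝ) ≤ 1 - ε := by linarith
  set c : ℝ := (n:ℝ) with hcdef
  set s := Real.sqrt ε with hsdef
  have hs : s^2 = ε := Real.sq_sqrt hε.le
  have hspos : 0 < s := Real.sqrt_pos.mpr hε
  have hslt : s < 1/10 := by nlinarith
  have hrp : ε ^ ((3:ℝ)/2) = s^3 := by
    rw [hsdef, Real.sqrt_eq_rpow, ← Real.rpow_natCast (ε ^ ((1:ℝ)/2)) 3,
      ← Real.rpow_mul hε.le]
    norm_num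
  rw [hrp] at h
  have hcpos : 0 < c := by nlinarith [pow_pos hspos 3]
  have hc1 : 1 ≤ c := by
    have hn : 0 < n := Nat.cast_pos.mp hcpos
    have : (1:ℝ) ≤ (n:ℝ) := by exact_mod_cast hn
    linarith [this]
  have hcne : c ≠ 0 := ne_of_gt hcpos
  set u : ℝ := 1 / c with hudef
  have hupos : 0 < u := by positivity
  have huc : u * c = 1 := by rw [hudef]; field_simp
  have hu1 : u ≤ 1 := by rw [hudef, div_le_one hcpos]; linarith
  have hus : 100 * u < s ^ 3 := by
    have h2 := mul_lt_mul_of_pos_left h hupos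
    calc 100 * u = u * 100 := by ring
    _ < u * (c * s^3) := h2
    _ = s ^ 3 := by rw [← mul_assoc, huc, one_mul]
  have r1 : ∀ x : ℝ, x / c = x * u := fun x => by rw [hudef]; ring
  have r2 : ∀ x : ℝ, x / c^2 = x * u^2 := fun x => by rw [hudef]; field_simp
  rw [r1, r2] at hA3 hA2
  rw [r2] at hA1
  have hq2 : (1-ε)^2 * u ≤ u := by nlinarith
  have hq3 : 0 ≤ (1-ε)^3 * u^2 := by positivity
  have hq3' : (1-ε)^3 * u^2 ≤ (1-ε)^2 * u := by
    have hk : (0:ℝ) ≤ (1-ε)^2 * u * (1 - (1-ε)*u) :=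
      mul_nonneg (mul_nonneg (sq_nonneg _) hupos.le) (by nlinarith)
    nlinarith [hk]
  have hA1lb : ε^3 ≤ A1 := by rw [hA1]; linarith
  have he2 : ε^2 < 1/10000 := by nlinarith
  have he32 : ε^3 ≤ ε^2 := by nlinarith
  have hs3 : s^3 < 1/1000 := by nlinarith [mul_pos hspos hspos]
  have hu5 : u < 1/100000 := by linarith
  have hA3lb : (0.99 : ℝ) ≤ A3 := by rw [hA3]; linarith [pow_pos hε 3]
  have hA2ub : A2 ≤ 3*ε^2 + 3*u := by rw [hA2]; linarith [pow_pos hε 3]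
  have hA2lb : 0 ≤ A2 := by rw [hA2]; linarith
  have hε4 : ε^2 = s^4 := by rw [← hs]; ring
  have hs4 : 3*s^4 ≤ 0.3*s^3 := by
    nlinarith [mul_nonneg (pow_pos hspos 3).le (show (0:ℝ) ≤ 1/10 - s by linarith)]
  have hb : 3*ε^2 + 3*u < 0.33 * s^3 := by rw [hε4]; linarith
  have h33 : (0:ℝ) ≤ 3*ε^2 + 3*u := by positivity
  have hsq : A2^2 ≤ (3*ε^2 + 3*u)^2 := pow_le_pow_left₀ hA2lb hA2ub 2
  have hsq2 : (3*ε^2 + 3*u)^2 < (0.33*s^3)^2 := by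
    exact pow_lt_pow_left₀ hb h33 (by norm_num)
  have hsq3 : (0.33*s^3)^2 < 0.99 * (s^3)^2 := by
    nlinarith [mul_pos (pow_pos hspos 3) (pow_pos hspos 3)]
  have hfin : 0.99 * (s^3)^2 ≤ A1 * A3 := by
    have h1 : (s^3)^2 = ε^3 := by rw [← hs]; ring
    rw [h1]
    have h2 : ε^3 * 0.99 ≤ A1 * A3 :=
      mul_le_mul hA1lb hA3lb (by norm_num) (le_trans (pow_pos hε 3).le hA1lb)
    linarith
  linarith

lemma urn_main (n : ℕ) (ε : ℝ) (hε : 0 < ε) (hε' : ε < 1/100)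
    (h : (100:ℝ) < n * ε ^ ((3:ℝ)/2)) :
    (urnA n ε 2)^2 < urnA n ε 1 * urnA n ε 3 := by
  have hrpos : 0 < ε ^ ((3:ℝ)/2) := Real.rpow_pos_of_pos hε _
  have hnpos : (0:ℝ) < (n:ℝ) := by nlinarith
  have hne : (n:ℝ) ≠ 0 := ne_of_gt hnpos
  have hS : ∑ j, urnP n ε j = 1 := by
    have h1 := urnP_pow_sum n ε 1
    simp only [pow_one] at h1
    rw [h1]; field_simp; ring
  have hS2 : ∑ j, (urnP n ε j)^2 = ε^2 + (1-ε)^2/(n:ℝ) := by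
    rw [urnP_pow_sum]; field_simp
  have hS3 : ∑ j, (urnP n ε j)^3 = ε^3 + (1-ε)^3/(n:ℝ)^2 := by
    rw [urnP_pow_sum]; field_simp
  have hA1 : urnA n ε 1 = ε^3 + (1-ε)^3/(n:ℝ)^2 := by rw [urnA_one, hS3]
  have hA3 : urnA n ε 3
      = 1 - 3*(ε^2 + (1-ε)^2/(n:ℝ)) + 2*(ε^3 + (1-ε)^3/(n:ℝ)^2) := by
    rw [urnA_three, hS, hS2, hS3]; ring
  have hT := urnA_total n ε
  rw [hS] at hT
  have hA2 : urnA n ε 2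
      = 3*(ε^2 + (1-ε)^2/(n:ℝ)) - 3*(ε^3 + (1-ε)^3/(n:ℝ)^2) := by
    have : urnA n ε 2 = 1 - urnA n ε 1 - urnA n ε 3 := by norm_num at hT; linarith
    rw [this, hA1, hA3]; ring
  exact urn_core n ε _ _ _ hε hε' h hA1 hA3 hA2

theorem stmt_14 :
    (∃ ε₀ C : ℝ, 0 < ε₀ ∧ ∀ (n : ℕ) (ε : ℝ), 0 < ε → ε < ε₀ →
        C < (n : ℝ) * ε ^ ((3 : ℝ) / 2) →
        (urnA n ε 2) ^ 2 < urnA n ε 1 * urnA n ε 3) ∧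
    ∃ (n : ℕ) (ε : ℝ), 0 < ε ∧ ε < 1 ∧
      (urnA n ε 2) ^ 2 < urnA n ε 1 * urnA n ε 3 := by
  constructor
  · exact ⟨1/100, 100, by norm_num, fun n ε hε hε' h => urn_main n ε hε hε' h⟩
  · refine ⟨10^6, 1/200, by norm_num, by norm_num, ?_⟩
    apply urn_main _ _ (by norm_num) (by norm_num)
    have h15 : (1/15 : ℝ) ≤ Real.sqrt (1/200) := by
      rw [show (1/200 : ℝ) = (1/200 : ℝ) from rfl]
      rw [← Real.sqrt_sq (by norm_num : (0:ℝ) ≤ 1/15)]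
      apply Real.sqrt_le_sqrt
      norm_num
    have hrp : (1/200 : ℝ) ^ ((3:ℝ)/2) = (Real.sqrt (1/200))^3 := by
      rw [Real.sqrt_eq_rpow, ← Real.rpow_natCast ((1/200:ℝ) ^ ((1:ℝ)/2)) 3,
        ← Real.rpow_mul (by norm_num : (0:ℝ) ≤ 1/200)]
      norm_num
    rw [hrp]
    have h3 : (1/15:ℝ)^3 ≤ (Real.sqrt (1/200))^3 :=
      pow_le_pow_left₀ (by norm_num) h15 3
    push_cast
    nlinarith
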